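/- Let (Ω,F,P) be atomless and A a surplus-invariant, law-invariant, conic, and truncation-closed acceptance set. Then there exists α ∈ [0,1] such that either A^-_α ⊆ A ⊆ A^0_α or A = A^+_α, where A^-_α = {X : P(X<0) < 1-α}, A^0_α = {X : P(X ≤ -ε) < 1-α ∀ε>0}, A^+_α = {X : P(X<0) ≤ 1-α}. -/

import Mathlib

open MeasureTheory
open scoped ENNReal

attribute [local instance] Classical.propDecidable

variable {Ω : Type*} [MeasurableSpace Ω]

lemma exists_subset_meas (μ : Measure Ω) [IsProbabilityMeasure μ]
    {U : Ω → ℝ} (hU : Measurable U)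
    (hUd : μ.map U = volume.restrict (Set.Icc (0:ℝ) 1))
    {G : Set Ω} (hG : MeasurableSet G) {r : ℝ≥0∞} (hr : r ≤ μ G) :
    ∃ F, MeasurableSet F ∧ F ⊆ G ∧ μ F = r := by
  have hUB : ∀ B : Set ℝ, MeasurableSet B → μ (U ⁻¹' B) = volume (B ∩ Set.Icc 0 1) := by
    intro B hB
    rw [← Measure.map_apply hU hB, hUd, Measure.restrict_apply hB]
  have hfin : ∀ s : Set Ω, μ s ≠ ⊤ := fun s => (measure_lt_top μ s).ne
  set h : ℝ → ℝ := fun t => (μ (G ∩ U ⁻¹' Set.Iic t)).toReal with hh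
  have hmono : Monotone h := by
    intro s t hst
    exact ENNReal.toReal_mono (hfin _) (measure_mono
      (Set.inter_subset_inter_right _ (Set.preimage_mono (Set.Iic_subset_Iic.2 hst))))
  have hlip : ∀ s t : ℝ, s ≤ t → h t ≤ h s + (t - s) := by
    intro s t hst
    have hsub : G ∩ U ⁻¹' Set.Iic t ⊆ (G ∩ U ⁻¹' Set.Iic s) ∪ U ⁻¹' Set.Ioc s t := by
      intro ω hω
      rcases le_or_gt (U ω) s with h1 | h1
      · exact Or.inl ⟨hω.1, h1⟩
      · exact Or.inr ⟨h1, hω.2⟩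
    have h2 : μ (U ⁻¹' Set.Ioc s t) ≤ ENNReal.ofReal (t - s) := by
      rw [hUB _ measurableSet_Ioc]
      calc volume (Set.Ioc s t ∩ Set.Icc 0 1) ≤ volume (Set.Ioc s t) :=
            measure_mono Set.inter_subset_left
        _ = ENNReal.ofReal (t - s) := by rw [Real.volume_Ioc]
    calc h t ≤ ((μ (G ∩ U ⁻¹' Set.Iic s)) + μ (U ⁻¹' Set.Ioc s t)).toReal :=
          ENNReal.toReal_mono (by finiteness)
            ((measure_mono hsub).trans (measure_union_le _ _))
      _ = h s + (μ (U ⁻¹' Set.Ioc s t)).toReal := by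
          rw [ENNReal.toReal_add (hfin _) (hfin _)]
      _ ≤ h s + (t - s) := by
          gcongr
          calc (μ (U ⁻¹' Set.Ioc s t)).toReal ≤ (ENNReal.ofReal (t-s)).toReal :=
                ENNReal.toReal_mono (by simp) h2
            _ ≤ t - s := by
                rcases le_total 0 (t-s) with hts | hts
                · rw [ENNReal.toReal_ofReal hts]
                · simp [ENNReal.ofReal_eq_zero.2 hts]; linarith
  have hcont : Continuous h := by
    have hl : LipschitzWith 1 h := by
      apply LipschitzWith.of_dist_le_mul
      intro s t
      rw [Real.dist_eq, Real.dist_eq, NNReal.coe_one, one_mul]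
      rcases le_total s t with hst | hst
      · have h1 := hmono hst
        have h2 := hlip s t hst
        rw [abs_of_nonpos (by linarith : h s - h t ≤ 0), abs_of_nonpos (by linarith)]
        linarith
      · have h1 := hmono hst
        have h2 := hlip t s hst
        rw [abs_of_nonneg (by linarith : 0 ≤ h s - h t), abs_of_nonneg (by linarith)]
        linarith
    exact hl.continuous
  have hm1 : h (-1) = 0 := by
    have : μ (G ∩ U ⁻¹' Set.Iic (-1)) = 0 := by
      refine le_antisymm ?_ zero_le
      calc μ (G ∩ U ⁻¹' Set.Iic (-1)) ≤ μ (U ⁻¹' Set.Iic (-1)) :=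
            measure_mono Set.inter_subset_right
        _ = volume (Set.Iic (-1) ∩ Set.Icc 0 1) := hUB _ measurableSet_Iic
        _ = 0 := by
            have : Set.Iic (-1:ℝ) ∩ Set.Icc 0 1 = ∅ := by
              ext x; simp only [Set.mem_inter_iff, Set.mem_Iic, Set.mem_Icc,
                Set.mem_empty_iff_false, iff_false, not_and, and_imp]
              intro h1 h2; linarith
            rw [this, measure_empty]
    simp [hh, this]
  have h2v : h 2 = (μ G).toReal := by
    have key : μ (G ∩ U ⁻¹' Set.Iic 2) = μ G := by
      refine le_antisymm (measure_mono Set.inter_subset_left) ?_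
      have hdiff : G \ (G ∩ U ⁻¹' Set.Iic 2) ⊆ U ⁻¹' Set.Ioi 2 := by
        intro ω hω
        simp only [Set.mem_diff, Set.mem_inter_iff, Set.mem_preimage, Set.mem_Iic,
          not_and, Set.mem_Ioi] at hω ⊢
        exact lt_of_not_ge (fun hle => (hω.2 hω.1) hle)
      have h0 : μ (U ⁻¹' Set.Ioi 2) = 0 := by
        rw [hUB _ measurableSet_Ioi]
        have : Set.Ioi (2:ℝ) ∩ Set.Icc 0 1 = ∅ := by
          ext x; simp only [Set.mem_inter_iff, Set.mem_Ioi, Set.mem_Icc,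
            Set.mem_empty_iff_false, iff_false, not_and, and_imp]
          intro h1 h2; linarith
        rw [this, measure_empty]
      calc μ G ≤ μ (G ∩ (G ∩ U ⁻¹' Set.Iic 2)) + μ (G \ (G ∩ U ⁻¹' Set.Iic 2)) :=
            measure_le_inter_add_diff μ G _
        _ ≤ μ (G ∩ U ⁻¹' Set.Iic 2) + μ (U ⁻¹' Set.Ioi 2) := by
            exact add_le_add (measure_mono Set.inter_subset_right) (measure_mono hdiff)
        _ = μ (G ∩ U ⁻¹' Set.Iic 2) := by rw [h0, add_zero]
    simp [hh, key]
  have hrne : r ≠ ⊤ := (lt_of_le_of_lt hr (measure_lt_top μ G)).ne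
  have hmem : r.toReal ∈ Set.Icc (h (-1)) (h 2) := by
    rw [hm1, h2v]
    exact ⟨ENNReal.toReal_nonneg, ENNReal.toReal_mono (hfin _) hr⟩
  obtain ⟨t, _, ht⟩ := intermediate_value_Icc (by norm_num : (-1:ℝ) ≤ 2)
    hcont.continuousOn hmem
  refine ⟨G ∩ U ⁻¹' Set.Iic t, hG.inter (hU measurableSet_Iic),
    Set.inter_subset_left, ?_⟩
  have := ht
  rw [hh] at this
  exact (ENNReal.toReal_eq_toReal_iff' (hfin _) hrne).1 this

lemma map_ind_eq (μ : Measure Ω) [IsProbabilityMeasure μ] {a : ℝ}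
    {E E' : Set Ω} (hE : MeasurableSet E) (hE' : MeasurableSet E') (h : μ E = μ E') :
    μ.map (E.indicator fun _ => a) = μ.map (E'.indicator fun _ => a) := by
  have key : ∀ (B : Set Ω), MeasurableSet B → ∀ s : Set ℝ, MeasurableSet s →
      μ.map (B.indicator fun _ => a) s =
      (if a ∈ s then μ B else 0) + (if (0:ℝ) ∈ s then μ Bᶜ else 0) := by
    intro B hB s hs
    rw [Measure.map_apply (measurable_const.indicator hB) hs]
    have hpre : (B.indicator fun _ => a) ⁻¹' s =
        (B ∩ (if a ∈ s then Set.univ else ∅)) ∪ (Bᶜ ∩ (if (0:ℝ) ∈ s then Set.univ else ∅)) := by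
      ext ω
      by_cases hω : ω ∈ B <;> by_cases h1 : a ∈ s <;> by_cases h2 : (0:ℝ) ∈ s <;>
        simp [Set.indicator, hω, h1, h2]
    rw [hpre, measure_union ?_ ?_]
    · congr 1 <;> split_ifs <;> simp
    · exact Set.disjoint_of_subset Set.inter_subset_left Set.inter_subset_left
        disjoint_compl_right
    · split_ifs <;> simp [hB.compl]
  ext s hs
  rw [key E hE s hs, key E' hE' s hs, h,
    measure_compl hE (measure_ne_top μ E), measure_compl hE' (measure_ne_top μ E'), h]

/-- Any surplus-invariant, law-invariant, conic, and truncation-closed acceptance set on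
an atomless probability space (one supporting a uniform random variable `U`) satisfies
`A⁻_α ⊆ A ⊆ A⁰_α` or `A = A⁺_α` for some `α ∈ [0,1]`. -/
theorem stmt_17 (μ : Measure Ω) [IsProbabilityMeasure μ]
    (U : Ω → ℝ) (hU : Measurable U)
    (hUd : μ.map U = volume.restrict (Set.Icc (0 : ℝ) 1))
    (𝒳 A : Set (Ω → ℝ))
    (h𝒳m : ∀ X ∈ 𝒳, Measurable X)
    (h𝒳b : ∀ X : Ω → ℝ, Measurable X → (∃ C : ℝ, ∀ ω, |X ω| ≤ C) → X ∈ 𝒳)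
    (hA𝒳 : A ⊆ 𝒳)
    (hSI : ∀ X ∈ A, ∀ Y ∈ 𝒳,
      (∀ᵐ ω ∂μ, max (-(Y ω)) 0 ≤ max (-(X ω)) 0) → Y ∈ A)
    (hLI : ∀ X ∈ A, ∀ Y ∈ 𝒳, μ.map Y = μ.map X → Y ∈ A)
    (hCon : ∀ X ∈ A, ∀ c : ℝ, 0 < c →
      (fun ω => c * X ω) ∈ 𝒳 → (fun ω => c * X ω) ∈ A)
    (hTC : ∀ X ∈ 𝒳,
      (∀ d : ℝ, 0 < d → (fun ω => min (max (-d) (X ω)) d) ∈ A) → X ∈ A) :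
    ∃ α ∈ Set.Icc (0 : ℝ) 1,
      ({X | X ∈ 𝒳 ∧ (μ {ω | X ω < 0}).toReal < 1 - α} ⊆ A ∧
        A ⊆ {X | X ∈ 𝒳 ∧ ∀ ε : ℝ, 0 < ε → (μ {ω | X ω ≤ -ε}).toReal < 1 - α}) ∨
      A = {X | X ∈ 𝒳 ∧ (μ {ω | X ω < 0}).toReal ≤ 1 - α} := by
  classical
  set S : Set ℝ := {s | s ∈ Set.Icc (0:ℝ) 1 ∧ ∃ F, MeasurableSet F ∧
      μ F = ENNReal.ofReal s ∧ (F.indicator fun _ => (-1:ℝ)) ∈ A} with hSdef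
  have hSbdd : BddAbove S := ⟨1, fun s hs => hs.1.2⟩
  set s₀ : ℝ := sSup S with hs₀def
  have hfin : ∀ s : Set Ω, μ s ≠ ⊤ := fun s => (measure_lt_top μ s).ne
  -- indicators are in 𝒳
  have hInd𝒳 : ∀ (a : ℝ) (E : Set Ω), MeasurableSet E →
      (E.indicator fun _ => a) ∈ 𝒳 := by
    intro a E hE
    refine h𝒳b _ (measurable_const.indicator hE) ⟨|a|, fun ω => ?_⟩
    by_cases hω : ω ∈ E <;> simp [Set.indicator, hω, abs_nonneg]
  -- scaling an indicator
  have hscale : ∀ (c a : ℝ) (E : Set Ω),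
      (fun ω => c * (E.indicator (fun _ => a) ω)) = E.indicator (fun _ => c * a) := by
    intro c a E; ext ω; by_cases hω : ω ∈ E <;> simp [Set.indicator, hω]
  -- L2 : from X ∈ A, positions of the form -1_F with small measure are acceptable
  have L2 : ∀ X ∈ A, ∀ ε : ℝ, 0 < ε → ∀ r : ℝ, r ∈ Set.Icc (0:ℝ) 1 →
      ENNReal.ofReal r ≤ μ {ω | X ω ≤ -ε} → r ∈ S := by
    intro X hX ε hε r hr hrle
    have hXm : Measurable X := h𝒳m X (hA𝒳 hX)
    have hGm : MeasurableSet {ω | X ω ≤ -ε} := measurableSet_le hXm measurable_const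
    obtain ⟨F, hFm, hFsub, hFμ⟩ := exists_subset_meas μ hU hUd hGm hrle
    have hY : (F.indicator fun _ => -ε) ∈ A := by
      refine hSI X hX _ (hInd𝒳 _ _ hFm) (Filter.Eventually.of_forall fun ω => ?_)
      by_cases hω : ω ∈ F
      · have hXω : X ω ≤ -ε := hFsub hω
        rw [Set.indicator_of_mem hω]
        have h1 : max (-(-ε)) 0 = ε := by rw [neg_neg, max_eq_left hε.le]
        rw [h1]
        exact le_max_of_le_left (by linarith)
      · rw [Set.indicator_of_notMem hω]
        simp
    have hmul := hCon _ hY (ε⁻¹) (by positivity) (by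
      rw [hscale]; exact hInd𝒳 _ _ hFm)
    rw [hscale] at hmul
    have heq : ε⁻¹ * (-ε) = -1 := by field_simp
    rw [heq] at hmul
    exact ⟨hr, F, hFm, hFμ, hmul⟩
  -- L1 (bounded version)
  have L1bdd : ∀ s ∈ S, ∀ X : Ω → ℝ, Measurable X → (∃ C : ℝ, ∀ ω, |X ω| ≤ C) →
      μ {ω | X ω < 0} ≤ ENNReal.ofReal s → X ∈ A := by
    rintro s hsS X hXm ⟨C, hC⟩ hle
    obtain ⟨hsIcc, F, hFm, hFμ, hFA⟩ := hsS
    have hlt : MeasurableSet {ω | X ω < 0} := measurableSet_lt hXm measurable_const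
    have hcompl : ENNReal.ofReal s - μ {ω | X ω < 0} ≤ μ ({ω | X ω < 0}ᶜ) := by
      rw [measure_compl hlt (hfin _)]
      refine tsub_le_tsub ?_ le_rfl
      rw [measure_univ]
      exact ENNReal.ofReal_le_one.2 hsIcc.2
    obtain ⟨F', hF'm, hF'sub, hF'μ⟩ := exists_subset_meas μ hU hUd hlt.compl hcompl
    set E' : Set Ω := {ω | X ω < 0} ∪ F' with hE'def
    have hE'm : MeasurableSet E' := hlt.union hF'm
    have hdisj : Disjoint {ω | X ω < 0} F' :=
      Set.disjoint_of_subset le_rfl hF'sub disjoint_compl_right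
    have hE'μ : μ E' = ENNReal.ofReal s := by
      rw [hE'def, measure_union hdisj hF'm, hF'μ]
      exact add_tsub_cancel_of_le hle
    set C' : ℝ := |C| + 1 with hC'def
    have hC'pos : 0 < C' := by positivity
    have hC'bd : ∀ ω, |X ω| ≤ C' := fun ω => (hC ω).trans (by
      rw [hC'def]; nlinarith [le_abs_self C, abs_nonneg C])
    have h1 : (F.indicator fun _ => -C') ∈ A := by
      have := hCon _ hFA C' hC'pos (by rw [hscale]; exact hInd𝒳 _ _ hFm)
      rw [hscale] at this
      have heq : C' * (-1) = -C' := by ring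
      rwa [heq] at this
    have h2 : (E'.indicator fun _ => -C') ∈ A := by
      refine hLI _ h1 _ (hInd𝒳 _ _ hE'm) (map_ind_eq μ hE'm hFm ?_)
      rw [hE'μ, hFμ]
    refine hSI _ h2 X (h𝒳b X hXm ⟨C', hC'bd⟩) (Filter.Eventually.of_forall fun ω => ?_)
    by_cases hω : X ω < 0
    · have hωE : ω ∈ E' := Or.inl hω
      rw [Set.indicator_of_mem hωE, neg_neg, max_eq_left hC'pos.le]
      refine max_le ?_ hC'pos.le
      have := hC'bd ω
      rw [abs_le] at this
      linarith [this.1]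
    · push_neg at hω
      have : max (-(X ω)) 0 = 0 := max_eq_right (by linarith)
      rw [this]
      positivity
  -- L1 (general version, via truncation)
  have L1 : ∀ s ∈ S, ∀ X ∈ 𝒳, μ {ω | X ω < 0} ≤ ENNReal.ofReal s → X ∈ A := by
    intro s hsS X hX𝒳 hle
    have hXm := h𝒳m X hX𝒳
    refine hTC X hX𝒳 fun d hd => ?_
    have htr : {ω | min (max (-d) (X ω)) d < 0} = {ω | X ω < 0} := by
      ext ω
      simp only [Set.mem_setOf_eq, min_lt_iff, max_lt_iff]
      constructor
      · rintro (⟨_, h⟩ | h)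
        · exact h
        · linarith
      · intro h; exact Or.inl ⟨by linarith, h⟩
    refine L1bdd s hsS _ ((measurable_const.max hXm).min measurable_const)
      ⟨d, fun ω => abs_le.2 ⟨le_min (le_max_left _ _) (by linarith), min_le_right _ _⟩⟩ ?_
    rw [htr]; exact hle
  -- s₀ bounds
  have hs₀nonneg : 0 ≤ s₀ := by
    rcases Set.eq_empty_or_nonempty S with hS | hS
    · rw [hs₀def, hS, Real.sSup_empty]
    · obtain ⟨s, hs⟩ := hS
      exact le_trans hs.1.1 (le_csSup hSbdd hs)
  have hs₀le1 : s₀ ≤ 1 := by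
    rcases Set.eq_empty_or_nonempty S with hS | hS
    · rw [hs₀def, hS, Real.sSup_empty]; norm_num
    · exact csSup_le hS fun s hs => hs.1.2
  by_cases hmem : s₀ ∈ S
  · -- right disjunct : A = A⁺
    refine ⟨1 - s₀, ⟨by linarith, by linarith⟩, Or.inr ?_⟩
    have hαs : 1 - (1 - s₀) = s₀ := by ring
    ext X
    simp only [Set.mem_setOf_eq, hαs]
    constructor
    · intro hX
      refine ⟨hA𝒳 hX, ?_⟩
      by_contra hgt
      push_neg at hgt
      -- continuity from below to find ε
      have hXm : Measurable X := h𝒳m X (hA𝒳 hX)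
      have hUn : {ω | X ω < 0} = ⋃ n : ℕ, {ω | X ω ≤ -(1/(n+1))} := by
        ext ω
        simp only [Set.mem_setOf_eq, Set.mem_iUnion]
        constructor
        · intro h
          obtain ⟨n, hn⟩ := exists_nat_one_div_lt (by linarith : (0:ℝ) < -(X ω))
          exact ⟨n, by push_cast at hn ⊢; linarith⟩
        · rintro ⟨n, hn⟩
          have : (0:ℝ) < 1/(n+1) := by positivity
          linarith
      have hmono2 : Monotone fun n : ℕ => {ω | X ω ≤ -(1/(n+1))} := by
        intro m n hmn ω hω
        simp only [Set.mem_setOf_eq] at hω ⊢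
        have hcast : (m:ℝ)+1 ≤ (n:ℝ)+1 := by exact_mod_cast Nat.succ_le_succ hmn
        have h1 : (1:ℝ)/(n+1) ≤ 1/(m+1) :=
          one_div_le_one_div_of_le (by positivity) hcast
        linarith
      have hsup : μ {ω | X ω < 0} = ⨆ n : ℕ, μ {ω | X ω ≤ -(1/(n+1))} := by
        rw [hUn]
        exact hmono2.directed_le.measure_iUnion
      have hofs : ENNReal.ofReal s₀ < μ {ω | X ω < 0} := by
        rw [← ENNReal.ofReal_toReal (hfin {ω | X ω < 0})]
        exact ENNReal.ofReal_lt_ofReal_iff_of_nonneg hs₀nonneg |>.2 hgt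
      rw [hsup] at hofs
      obtain ⟨n, hn⟩ := lt_iSup_iff.1 hofs
      set ε : ℝ := 1/(n+1) with hεdef
      have hε : 0 < ε := by positivity
      set r : ℝ := (μ {ω | X ω ≤ -ε}).toReal with hrdef
      have hr1 : r ≤ 1 := by
        rw [hrdef]
        exact ENNReal.toReal_le_of_le_ofReal one_pos.le (by simpa using prob_le_one)
      have hrS : r ∈ S := by
        refine L2 X hX ε hε r ⟨ENNReal.toReal_nonneg, hr1⟩ ?_
        rw [hrdef, ENNReal.ofReal_toReal (hfin _)]
      have hrles₀ : r ≤ s₀ := le_csSup hSbdd hrS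
      have : s₀ < r := by
        have := (ENNReal.ofReal_lt_iff_lt_toReal hs₀nonneg (hfin _)).1 hn
        exact this
      linarith
    · rintro ⟨hX𝒳, hle⟩
      refine L1 s₀ hmem X hX𝒳 ?_
      rw [← ENNReal.ofReal_toReal (hfin {ω | X ω < 0})]
      exact ENNReal.ofReal_le_ofReal hle
  · -- left disjunct
    refine ⟨1 - s₀, ⟨by linarith, by linarith⟩, Or.inl ⟨?_, ?_⟩⟩
    · rintro X ⟨hX𝒳, hlt⟩
      have hαs : 1 - (1 - s₀) = s₀ := by ring
      rw [hαs] at hlt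
      have hSne : S.Nonempty := by
        by_contra h
        rw [Set.not_nonempty_iff_eq_empty] at h
        rw [hs₀def, h, Real.sSup_empty] at hlt
        exact absurd hlt (not_lt.2 ENNReal.toReal_nonneg)
      obtain ⟨s, hsS, hs⟩ := exists_lt_of_lt_csSup hSne hlt
      refine L1 s hsS X hX𝒳 ?_
      rw [← ENNReal.ofReal_toReal (hfin {ω | X ω < 0})]
      exact ENNReal.ofReal_le_ofReal hs.le
    · intro X hX
      refine ⟨hA𝒳 hX, fun ε hε => ?_⟩
      have hαs : 1 - (1 - s₀) = s₀ := by ring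
      rw [hαs]
      by_contra hge
      push_neg at hge
      have : s₀ ∈ S := by
        refine L2 X hX ε hε s₀ ⟨hs₀nonneg, hs₀le1⟩ ?_
        rw [← ENNReal.ofReal_toReal (hfin {ω | X ω ≤ -ε})]
        exact ENNReal.ofReal_le_ofReal hge
      exact hmem this
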